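/- Suppose (b_j)_{j∈ℕ} ∈ {-1,1}^ℕ and for each n define C_{2,n} = max over pairs d₁ < d₂ and M with M + d₂ ≤ n of |∑_{k=1}^{M} b_{k+d₁} b_{k+d₂}|. If for some fixed ε > 0 there exists n₀ such that C_{2,n} < n^{1/2+ε} for all n ≥ n₀, and ε < 1/2, then lim_{n→∞} (1/n) ∑_{i=1}^{n} ∑_{k=0}^{n-i} b_{k+i} b_k / 2^i = 0. -/

import Mathlib

open Filter Finset

theorem correlation_sum_limit (b : ℕ → ℝ) (hb : ∀ j, b j = 1 ∨ b j = -1)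
    (C2 : ℕ → ℝ)
    (hC2 : ∀ n ≥ 1, IsGreatest
      {x : ℝ | ∃ d₁ d₂ M : ℕ, d₁ < d₂ ∧ M + d₂ ≤ n ∧
        x = |∑ k ∈ Icc 1 M, b (k + d₁) * b (k + d₂)|} (C2 n))
    (ε : ℝ) (hε : 0 < ε) (hε' : ε < 1 / 2)
    (n₀ : ℕ) (hbound : ∀ n ≥ n₀, C2 n < (n : ℝ) ^ ((1 : ℝ) / 2 + ε)) :
    Tendsto (fun n : ℕ =>
        (1 / (n : ℝ)) * ∑ i ∈ Icc 1 n, ∑ k ∈ range (n - i + 1), b (k + i) * b k / 2 ^ i)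
      atTop (nhds 0) := by
  set a : ℝ := (1 : ℝ) / 2 + ε with ha
  have habs : ∀ j, |b j| = 1 := fun j => by rcases hb j with h | h <;> simp [h]
  have hC2nn : ∀ n, 1 ≤ n → 0 ≤ C2 n := by
    intro n hn
    obtain ⟨d₁, d₂, M, _, _, hx⟩ := (hC2 n hn).1
    rw [hx]; exact abs_nonneg _
  -- inner sum bound
  have hinner : ∀ n i, 1 ≤ i → i ≤ n →
      |∑ k ∈ range (n - i + 1), b (k + i) * b k| ≤ 1 + C2 n := by
    intro n i hi hin
    have hsplit : ∑ k ∈ range (n - i + 1), b (k + i) * b k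
        = (∑ k ∈ Icc 1 (n - i), b (k + i) * b k) + b (0 + i) * b 0 := by
      rw [Finset.sum_range_succ' (fun k => b (k + i) * b k) (n - i),
        show Icc 1 (n - i) = Ico 1 (n - i + 1) from (Finset.Ico_add_one_right_eq_Icc (a := 1) (b := n-i)).symm,
        Finset.sum_Ico_eq_sum_range]
      simp only [Nat.add_sub_cancel]
      congr 1
      apply Finset.sum_congr rfl
      intro k _
      rw [show k + 1 + i = 1 + k + i from by omega, show k + 1 = 1 + k from by omega]
    have hmem : |∑ k ∈ Icc 1 (n - i), b (k + i) * b k| ≤ C2 n := by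
      apply (hC2 n (le_trans hi hin)).2
      refine ⟨0, i, n - i, hi, by omega, ?_⟩
      congr 1
      apply Finset.sum_congr rfl
      intro k _
      rw [Nat.add_zero, mul_comm]
    calc |∑ k ∈ range (n - i + 1), b (k + i) * b k|
        ≤ |∑ k ∈ Icc 1 (n - i), b (k + i) * b k| + |b (0 + i) * b 0| := by
          rw [hsplit]; exact abs_add_le _ _
      _ ≤ C2 n + 1 := by
          apply add_le_add hmem
          rw [abs_mul, habs, habs]; norm_num
      _ = 1 + C2 n := by ring
  have hgeo : ∀ n : ℕ, ∑ i ∈ Icc 1 n, ((1 : ℝ) / 2) ^ i ≤ 1 := by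
    have h : ∀ n : ℕ, ∑ i ∈ Icc 1 n, ((1 : ℝ) / 2) ^ i = 1 - (1 / 2) ^ n := by
      intro n
      induction n with
      | zero => simp
      | succ n ih => rw [Finset.sum_Icc_succ_top (by omega), ih]; ring
    intro n
    rw [h]
    have : (0 : ℝ) ≤ (1 / 2) ^ n := by positivity
    linarith
  -- full bound
  have hfull : ∀ n : ℕ, 1 ≤ n →
      |(1 / (n : ℝ)) * ∑ i ∈ Icc 1 n, ∑ k ∈ range (n - i + 1), b (k + i) * b k / 2 ^ i|
        ≤ (1 + C2 n) / n := by
    intro n hn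
    have hnpos : (0 : ℝ) < n := by exact_mod_cast hn
    have hsum : |∑ i ∈ Icc 1 n, ∑ k ∈ range (n - i + 1), b (k + i) * b k / 2 ^ i|
        ≤ 1 + C2 n := by
      calc |∑ i ∈ Icc 1 n, ∑ k ∈ range (n - i + 1), b (k + i) * b k / 2 ^ i|
          ≤ ∑ i ∈ Icc 1 n, |∑ k ∈ range (n - i + 1), b (k + i) * b k / 2 ^ i| :=
            Finset.abs_sum_le_sum_abs _ _
        _ ≤ ∑ i ∈ Icc 1 n, (1 + C2 n) * ((1 : ℝ) / 2) ^ i := by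
            apply Finset.sum_le_sum
            intro i hi
            rw [Finset.mem_Icc] at hi
            have h2 : (0 : ℝ) < 2 ^ i := by positivity
            rw [← Finset.sum_div, abs_div, abs_of_pos h2, div_le_iff₀ h2]
            have := hinner n i hi.1 hi.2
            calc |∑ k ∈ range (n - i + 1), b (k + i) * b k| ≤ 1 + C2 n := this
              _ = (1 + C2 n) * ((1 : ℝ) / 2) ^ i * 2 ^ i := by
                  rw [div_pow, one_pow, mul_assoc, div_mul_cancel₀]
                  · ring
                  · positivity
        _ = (1 + C2 n) * ∑ i ∈ Icc 1 n, ((1 : ℝ) / 2) ^ i := by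
            rw [Finset.mul_sum]
        _ ≤ (1 + C2 n) * 1 := by
            apply mul_le_mul_of_nonneg_left (hgeo n)
            have := hC2nn n hn; linarith
        _ = 1 + C2 n := mul_one _
    rw [abs_mul, abs_of_pos (by positivity : (0:ℝ) < 1 / n), div_mul_eq_mul_div, one_mul]
    exact div_le_div_of_nonneg_right hsum hnpos.le |>.trans_eq rfl
  -- squeeze
  apply squeeze_zero_norm' (a := fun n : ℕ => (1 + (n : ℝ) ^ a) / n)
  · filter_upwards [eventually_ge_atTop (max n₀ 1)] with n hn
    have hn1 : 1 ≤ n := le_trans (le_max_right _ _) hn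
    have hn0 : n₀ ≤ n := le_trans (le_max_left _ _) hn
    have hnpos : (0 : ℝ) < n := by exact_mod_cast hn1
    refine le_trans (hfull n hn1) ?_
    gcongr
    linarith [hbound n hn0]
  · have h1 : Tendsto (fun n : ℕ => (1 : ℝ) / n) atTop (nhds 0) :=
      tendsto_one_div_atTop_nhds_zero_nat
    have h2 : Tendsto (fun n : ℕ => (n : ℝ) ^ (a - 1)) atTop (nhds 0) := by
      have ha1 : a - 1 < 0 := by rw [ha]; linarith
      have := tendsto_rpow_neg_atTop (show (0:ℝ) < -(a - 1) by linarith)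
      simpa [Function.comp_def] using this.comp tendsto_natCast_atTop_atTop
    have := h1.add h2
    rw [add_zero] at this
    apply this.congr'
    filter_upwards [eventually_ge_atTop 1] with n hn
    have hnpos : (0 : ℝ) < n := by exact_mod_cast hn
    rw [Real.rpow_sub hnpos, Real.rpow_one, add_div]
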